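/- Conversely, suppose ψ : ℝ^d → ℝ^d is continuous and for every T > 0, every probability measure m₀, and all σ₁, σ₂ ∈ ℝ^d one has ∫ (ψ(x − Tσ₁) − ψ(x − Tσ₂))·(σ₁ − σ₂) dm₀(x) ≤ |σ₁ − σ₂|². Then ψ is a monotone vector field: (ψ(σ₁) − ψ(σ₂))·(σ₁ − σ₂) ≥ 0 for all σ₁, σ₂ ∈ ℝ^d. -/

import Mathlib

open MeasureTheory

theorem stmt_11 (d : ℕ) (ψ : EuclideanSpace ℝ (Fin d) → EuclideanSpace ℝ (Fin d))
    (hcont : Continuous ψ)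
    (hyp : ∀ T : ℝ, 0 < T → ∀ m₀ : Measure (EuclideanSpace ℝ (Fin d)),
      IsProbabilityMeasure m₀ → ∀ σ₁ σ₂ : EuclideanSpace ℝ (Fin d),
      (∫ x, (inner ℝ (ψ (x - T • σ₁) - ψ (x - T • σ₂)) (σ₁ - σ₂) : ℝ) ∂m₀) ≤ ‖σ₁ - σ₂‖^2) :
    ∀ σ₁ σ₂ : EuclideanSpace ℝ (Fin d), (0:ℝ) ≤ inner ℝ (ψ σ₁ - ψ σ₂) (σ₁ - σ₂) := by
  intro σ₁ σ₂
  set c : ℝ := inner ℝ (ψ σ₁ - ψ σ₂) (σ₁ - σ₂) with hc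
  have key : ∀ T : ℝ, 0 < T → -(T⁻¹ * ‖σ₁ - σ₂‖^2) ≤ c := by
    intro T hT
    have h := hyp T hT (Measure.dirac 0) (by infer_instance) (-(T⁻¹ • σ₁)) (-(T⁻¹ • σ₂))
    rw [integral_dirac] at h
    have e1 : (0 : EuclideanSpace ℝ (Fin d)) - T • -(T⁻¹ • σ₁) = σ₁ := by
      rw [smul_neg, smul_smul, mul_inv_cancel₀ hT.ne', one_smul]; simp
    have e2 : (0 : EuclideanSpace ℝ (Fin d)) - T • -(T⁻¹ • σ₂) = σ₂ := by
      rw [smul_neg, smul_smul, mul_inv_cancel₀ hT.ne', one_smul]; simp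
    rw [e1, e2] at h
    have e3 : -(T⁻¹ • σ₁) - -(T⁻¹ • σ₂) = (-T⁻¹) • (σ₁ - σ₂) := by
      rw [neg_smul, smul_sub]; abel
    rw [e3, real_inner_smul_right, norm_smul] at h
    have hTi : (0:ℝ) < T⁻¹ := inv_pos.mpr hT
    have h' : -T⁻¹ * c ≤ T⁻¹^2 * ‖σ₁ - σ₂‖^2 := by
      calc -T⁻¹ * c ≤ (‖(-T⁻¹ : ℝ)‖ * ‖σ₁ - σ₂‖)^2 := h
        _ = T⁻¹^2 * ‖σ₁ - σ₂‖^2 := by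
            rw [mul_pow, Real.norm_eq_abs, abs_neg, abs_of_pos hTi]
    nlinarith [hTi]
  by_contra hneg
  push_neg at hneg
  have hn : 0 < ‖σ₁ - σ₂‖^2 := by
    rcases eq_or_ne σ₁ σ₂ with rfl | hne
    · simp [hc] at hneg
    · exact pow_pos (by rwa [norm_sub_pos_iff]) 2
  have hT : 0 < (2 * ‖σ₁ - σ₂‖^2) / (-c) := div_pos (by positivity) (neg_pos.mpr hneg)
  have h1 := key _ hT
  rw [inv_div] at h1
  have h2 : -c / (2 * ‖σ₁ - σ₂‖^2) * ‖σ₁ - σ₂‖^2 = -c / 2 := by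
    rw [div_mul_eq_mul_div, mul_div_mul_right _ _ hn.ne']
  rw [h2] at h1
  linarith
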